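/- Let f, g : [0,1] → ℝ be convex functions, let x* ∈ [0,1] be a minimizer of f over [0,1] and set f* = f(x*). Let x ∈ [0,1] satisfy g(x) ≤ f* < f(x). Then for every Borel probability measure ν on ℝ whose support is contained in the closed interval with endpoints x* and x, one has (∫(f−g)² dν) / (f(x)−g(x))² ≥ ν({x*}) · (∫(f−f*)² dν) / (f(x)−f*)². -/

import Mathlib

set_option maxHeartbeats 1000000

open MeasureTheory Set

private lemma scalar_key (p b c s G : ℝ) (hp : 0 ≤ p) (hp1 : p ≤ 1) (hb : 0 < b) (hc : 0 ≤ c)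
    (hs : 0 ≤ s) (hG : s * b - (1 - s) * c ≤ G) :
    p * (1 - p) * b ^ 2 * s ^ 2 ≤ p * c ^ 2 + (1 - p) * G ^ 2 := by
  have h2 : 0 ≤ (1 - p) * G ^ 2 := mul_nonneg (by linarith) (sq_nonneg _)
  rcases le_or_gt (s * (b + c)) c with h | h
  · have h0 : 0 ≤ b * s := mul_nonneg hb.le hs
    have h1 : b * s ≤ c := by nlinarith
    have h1' : (b * s) ^ 2 ≤ c ^ 2 := by nlinarith
    nlinarith [mul_nonneg hp (mul_nonneg hp (sq_nonneg (b * s)))]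
  · have hu : 0 < s * (b + c) - c := by linarith
    have hGu : s * (b + c) - c ≤ G := by nlinarith
    have hG2 : (s * (b + c) - c) ^ 2 ≤ G ^ 2 := by nlinarith
    rcases eq_or_lt_of_le hp1 with h' | h'
    · subst h'
      nlinarith [sq_nonneg c]
    · have hb2 : 0 < (1 - p) * b ^ 2 := mul_pos (by linarith) (by positivity)
      have hbc : b ^ 2 ≤ (b + c) ^ 2 := by nlinarith
      have hD : 0 < (b + c) ^ 2 - p * b ^ 2 := by nlinarith
      nlinarith [sq_nonneg (((b + c) ^ 2 - p * b ^ 2) * s - c * (b + c)),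
        mul_nonneg hp (mul_nonneg (mul_nonneg hc (mul_nonneg hc hc))
          (by linarith : (0:ℝ) ≤ 2 * b + c)),
        mul_le_mul_of_nonneg_left hG2 (by linarith : (0:ℝ) ≤ 1 - p),
        mul_pos hD hD]

private lemma convexOn_aesm (f : ℝ → ℝ) (hf : ConvexOn ℝ (Icc (0:ℝ) 1) f)
    (ν : Measure ℝ) (hν : ν (Icc (0:ℝ) 1)ᶜ = 0) : AEStronglyMeasurable f ν := by
  have hc : ContinuousOn f (Ioo 0 1) := by
    have := hf.continuousOn_interior
    rwa [interior_Icc] at this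
  have h1 : AEStronglyMeasurable f (ν.restrict (Ioo 0 1)) :=
    hc.aestronglyMeasurable measurableSet_Ioo
  have h2 : AEStronglyMeasurable f (ν.restrict ({0, 1} : Set ℝ)) := by
    refine ⟨fun t => if t = 0 then f 0 else if t = 1 then f 1 else 0, ?_, ?_⟩
    · refine StronglyMeasurable.ite (measurableSet_eq) stronglyMeasurable_const ?_
      exact StronglyMeasurable.ite (measurableSet_eq) stronglyMeasurable_const
        stronglyMeasurable_const
    · refine (ae_restrict_iff' (by measurability)).2 (Filter.Eventually.of_forall fun t ht => ?_)
      simp only [mem_insert_iff, mem_singleton_iff] at ht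
      rcases ht with rfl | rfl <;> norm_num
  have h3 : AEStronglyMeasurable f (ν.restrict (Ioo 0 1) + ν.restrict {0, 1}) :=
    h1.add_measure h2
  refine h3.mono_measure ?_
  have e1 : ν = ν.restrict (Icc 0 1) := by
    conv_lhs => rw [← Measure.restrict_add_restrict_compl (μ := ν)
      (measurableSet_Icc (a := (0:ℝ)) (b := 1))]
    rw [Measure.restrict_eq_zero.2 hν, add_zero]
  calc ν = ν.restrict (Icc 0 1) := e1
    _ ≤ ν.restrict (Ioo 0 1 ∪ {0, 1}) := by
        refine Measure.restrict_mono (fun t ht => ?_) le_rfl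
        rcases eq_or_lt_of_le ht.1 with h | h
        · exact Or.inr (Or.inl h.symm)
        · rcases eq_or_lt_of_le ht.2 with h' | h'
          · exact Or.inr (Or.inr h')
          · exact Or.inl ⟨h, h'⟩
    _ ≤ _ := Measure.restrict_union_le _ _

/-- **Local-to-global lemma.** -/
theorem local_to_global
    (f g : ℝ → ℝ)
    (hf : ConvexOn ℝ (Icc (0:ℝ) 1) f) (hg : ConvexOn ℝ (Icc (0:ℝ) 1) g)
    (xstar : ℝ) (hxstar : xstar ∈ Icc (0:ℝ) 1)
    (hmin : ∀ y ∈ Icc (0:ℝ) 1, f xstar ≤ f y)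
    (x : ℝ) (hx : x ∈ Icc (0:ℝ) 1)
    (hgx : g x ≤ f xstar) (hfx : f xstar < f x)
    (ν : Measure ℝ) [IsProbabilityMeasure ν]
    (hν : ν (uIcc xstar x)ᶜ = 0) :
    (ν {xstar}).toReal * ((∫ t, (f t - f xstar) ^ 2 ∂ν) / (f x - f xstar) ^ 2)
      ≤ (∫ t, (f t - g t) ^ 2 ∂ν) / (f x - g x) ^ 2 := by
  have hsub : uIcc xstar x ⊆ Icc (0:ℝ) 1 := uIcc_subset_Icc hxstar hx
  have hνI : ν (Icc (0:ℝ) 1)ᶜ = 0 :=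
    measure_mono_null (compl_subset_compl.2 hsub) hν
  have hFx : 0 < f x - f xstar := sub_pos.2 hfx
  have hbpos : 0 < f x - g x := by linarith
  have hae : ∀ᵐ t ∂ν, t ∈ uIcc xstar x := by
    rw [ae_iff]
    exact hν
  have hmf : AEStronglyMeasurable f ν := convexOn_aesm f hf ν hνI
  have hmg : AEStronglyMeasurable g ν := convexOn_aesm g hg ν hνI
  -- bounds on f, g over Icc 0 1
  set Cf : ℝ := max (f 0) (f 1) with hCf
  set Cg : ℝ := max (g 0) (g 1) with hCg
  set Lg : ℝ := 2 * g 2⁻¹ - Cg with hLg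
  have h01 : (0:ℝ) ∈ Icc (0:ℝ) 1 := left_mem_Icc.2 zero_le_one
  have h11 : (1:ℝ) ∈ Icc (0:ℝ) 1 := right_mem_Icc.2 zero_le_one
  have hfub : ∀ t ∈ Icc (0:ℝ) 1, f t ≤ Cf := fun t ht =>
    hf.le_on_segment h01 h11 (by rwa [segment_eq_Icc zero_le_one])
  have hgub : ∀ t ∈ Icc (0:ℝ) 1, g t ≤ Cg := fun t ht =>
    hg.le_on_segment h01 h11 (by rwa [segment_eq_Icc zero_le_one])
  have hglb : ∀ t ∈ Icc (0:ℝ) 1, Lg ≤ g t := by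
    intro t ht
    have h1t : (1 - t) ∈ Icc (0:ℝ) 1 := ⟨by linarith [ht.2], by linarith [ht.1]⟩
    have hm : g ((1/2 : ℝ) • t + (1/2 : ℝ) • (1 - t)) ≤
        (1/2 : ℝ) • g t + (1/2 : ℝ) • g (1 - t) :=
      hg.2 ht h1t (by norm_num) (by norm_num) (by norm_num)
    have he : (1/2 : ℝ) • t + (1/2 : ℝ) • (1 - t) = (2⁻¹ : ℝ) := by
      simp only [smul_eq_mul]; ring
    rw [he] at hm
    simp only [smul_eq_mul] at hm
    have := hgub _ h1t
    rw [hLg]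
    linarith
  -- integrability
  have hIF : Integrable (fun t => (f t - f xstar) ^ 2) ν := by
    refine ⟨?_, ?_⟩
    · exact (aestronglyMeasurable_iff_aemeasurable.2
        ((hmf.aemeasurable.sub aemeasurable_const).pow aemeasurable_const))
    · refine HasFiniteIntegral.of_bounded (C := (Cf - f xstar) ^ 2) ?_
      filter_upwards [hae] with t ht
      have h1 := hmin t (hsub ht)
      have h2 := hfub t (hsub ht)
      rw [Real.norm_eq_abs, abs_of_nonneg (sq_nonneg _)]
      nlinarith
  have hIG : Integrable (fun t => (f t - g t) ^ 2) ν := by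
    refine ⟨?_, ?_⟩
    · exact (aestronglyMeasurable_iff_aemeasurable.2
        ((hmf.aemeasurable.sub hmg.aemeasurable).pow aemeasurable_const))
    · refine HasFiniteIntegral.of_bounded (C := (max (Cf - Lg) (Cg - f xstar)) ^ 2) ?_
      filter_upwards [hae] with t ht
      have h1 := hmin t (hsub ht)
      have h2 := hfub t (hsub ht)
      have h3 := hglb t (hsub ht)
      have h4 := hgub t (hsub ht)
      rw [Real.norm_eq_abs, abs_of_nonneg (sq_nonneg _)]
      have hu1 : f t - g t ≤ max (Cf - Lg) (Cg - f xstar) :=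
        le_trans (by linarith) (le_max_left _ _)
      have hu2 : -(max (Cf - Lg) (Cg - f xstar)) ≤ f t - g t := by
        have : Cg - f xstar ≤ max (Cf - Lg) (Cg - f xstar) := le_max_right _ _
        linarith
      exact sq_le_sq' hu2 hu1
  -- probability bookkeeping
  set p := (ν {xstar}).toReal with hp
  have hp0 : 0 ≤ p := ENNReal.toReal_nonneg
  set q := (ν ({xstar}ᶜ)).toReal with hq
  have hq0 : 0 ≤ q := ENNReal.toReal_nonneg
  have hpq : p + q = 1 := by
    rw [hp, hq, ← ENNReal.toReal_add (measure_ne_top ν _) (measure_ne_top ν _),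
      measure_add_measure_compl (measurableSet_singleton xstar), measure_univ,
      ENNReal.toReal_one]
  have hp1 : p ≤ 1 := by linarith
  -- geometric constants
  set c := max (g xstar - f xstar) 0 with hcdef
  have hc0 : 0 ≤ c := le_max_right _ _
  have hcK : c ^ 2 ≤ (f xstar - g xstar) ^ 2 := by
    rcases max_cases (g xstar - f xstar) 0 with ⟨h1, _⟩ | ⟨h1, _⟩ <;> rw [hcdef, h1] <;> nlinarith
  set K := (f xstar - g xstar) ^ 2 with hKdef
  set A := p * (1 - p) * (f x - g x) ^ 2 / (f x - f xstar) ^ 2 with hAdef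
  -- pointwise key inequality
  have key : ∀ t ∈ uIcc xstar x,
      A * (f t - f xstar) ^ 2 ≤ p * K + (1 - p) * (f t - g t) ^ 2 := by
    intro t ht
    have htI : t ∈ Icc (0:ℝ) 1 := hsub ht
    rw [← segment_eq_uIcc] at ht
    obtain ⟨a', b', ha', hb', hab', hteq⟩ := ht
    have hft : f t ≤ a' * f xstar + b' * f x := by
      have := hf.2 hxstar hx ha' hb' hab'
      rw [hteq] at this
      simpa [smul_eq_mul] using this
    have hgt : g t ≤ a' * g xstar + b' * g x := by
      have := hg.2 hxstar hx ha' hb' hab'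
      rw [hteq] at this
      simpa [smul_eq_mul] using this
    have hF0 : 0 ≤ f t - f xstar := sub_nonneg.2 (hmin t htI)
    set σ := (f t - f xstar) / (f x - f xstar) with hσdef
    have hσ0 : 0 ≤ σ := div_nonneg hF0 hFx.le
    have hσb' : σ ≤ b' := by
      rw [hσdef, div_le_iff₀ hFx]
      have hft' : f t ≤ (1 - b') * f xstar + b' * f x := by
        rwa [show a' = 1 - b' by linarith] at hft
      nlinarith [hft']
    have hFt : f t - f xstar = σ * (f x - f xstar) := (div_mul_cancel₀ _ hFx.ne').symm
    have hkey : σ * (f x - g x) - (1 - σ) * c ≤ f t - g t := by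
      have h1 : g xstar - f xstar ≤ c := le_max_left _ _
      have h2 : 0 ≤ f xstar - g x := sub_nonneg.2 hgx
      have habc : a' * c + b' * c = c := by
        have : (a' + b') * c = 1 * c := by rw [hab']
        linarith [this]
      have habf : a' * f xstar + b' * f xstar = f xstar := by
        have : (a' + b') * f xstar = 1 * f xstar := by rw [hab']
        linarith [this]
      nlinarith [mul_nonneg (sub_nonneg.2 hσb') h2,
        mul_nonneg ha' (sub_nonneg.2 h1),
        mul_nonneg (sub_nonneg.2 hσb') hc0, habc, habf]
    have hmain := scalar_key p (f x - g x) c σ (f t - g t) hp0 hp1 hbpos hc0 hσ0 hkey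
    have hσsq : (f t - f xstar) ^ 2 = σ ^ 2 * (f x - f xstar) ^ 2 := by
      rw [hFt]; ring
    have hA : A * (f t - f xstar) ^ 2 = p * (1 - p) * (f x - g x) ^ 2 * σ ^ 2 := by
      rw [hAdef, hσsq]
      field_simp
    rw [hA]
    have hpK : p * c ^ 2 ≤ p * K := mul_le_mul_of_nonneg_left hcK hp0
    linarith
  -- split on whether ν is concentrated at xstar
  by_cases hqz : ν ({xstar}ᶜ) = 0
  · have haeX : ∀ᵐ t ∂ν, t = xstar := by
      rw [ae_iff]
      exact hqz
    have hF0 : (∫ t, (f t - f xstar) ^ 2 ∂ν) = 0 := by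
      have : (fun t => (f t - f xstar) ^ 2) =ᵐ[ν] fun _ => 0 :=
        haeX.mono fun t ht => by simp [ht]
      rw [integral_congr_ae this, integral_zero]
    rw [hF0, zero_div, mul_zero]
    exact div_nonneg (integral_nonneg fun t => sq_nonneg _) (sq_nonneg _)
  · have hqpos : 0 < q := ENNReal.toReal_pos hqz (measure_ne_top ν _)
    have h1p : 0 < 1 - p := by linarith
    -- the integral comparison on {xstar}ᶜ
    have hmono : (∫ t in ({xstar}ᶜ : Set ℝ), A * (f t - f xstar) ^ 2 ∂ν)
        ≤ ∫ t in ({xstar}ᶜ : Set ℝ), (p * K + (1 - p) * (f t - g t) ^ 2) ∂ν := by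
      refine integral_mono_ae ((hIF.const_mul A).restrict)
        (((integrable_const (p * K)).add (hIG.const_mul (1 - p))).restrict) ?_
      exact (ae_restrict_of_ae hae).mono fun t ht => key t ht
    have hsingF : (∫ t in ({xstar} : Set ℝ), (f t - f xstar) ^ 2 ∂ν) = 0 := by
      rw [integral_singleton]
      simp
    have hsingG : (∫ t in ({xstar} : Set ℝ), (f t - g t) ^ 2 ∂ν) = p * K := by
      rw [integral_singleton, hKdef, hp, smul_eq_mul]
      rfl
    have hsplitF := integral_add_compl (measurableSet_singleton xstar) hIF
    have hsplitG := integral_add_compl (measurableSet_singleton xstar) hIG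
    have hLHS : (∫ t in ({xstar}ᶜ : Set ℝ), A * (f t - f xstar) ^ 2 ∂ν)
        = A * ∫ t, (f t - f xstar) ^ 2 ∂ν := by
      rw [integral_const_mul]
      congr 1
      linarith [hsplitF, hsingF]
    have hRHS : (∫ t in ({xstar}ᶜ : Set ℝ), (p * K + (1 - p) * (f t - g t) ^ 2) ∂ν)
        = q * (p * K) + (1 - p) * ((∫ t, (f t - g t) ^ 2 ∂ν) - p * K) := by
      have hcg : (∫ t in ({xstar}ᶜ : Set ℝ), (f t - g t) ^ 2 ∂ν)
          = (∫ t, (f t - g t) ^ 2 ∂ν) - p * K := by linarith [hsplitG, hsingG]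
      rw [integral_add ((integrable_const (p * K)).restrict) ((hIG.const_mul (1 - p)).restrict),
        setIntegral_const, integral_const_mul, hcg, smul_eq_mul, measureReal_def, ← hq]
    rw [hLHS, hRHS] at hmono
    have hmain : A * (∫ t, (f t - f xstar) ^ 2 ∂ν)
        ≤ (1 - p) * ∫ t, (f t - g t) ^ 2 ∂ν := by
      have hq1p : q = 1 - p := by linarith
      rw [hq1p] at hmono
      linarith
    rw [le_div_iff₀ (by positivity : (0:ℝ) < (f x - g x) ^ 2)]
    have heq : p * ((∫ t, (f t - f xstar) ^ 2 ∂ν) / (f x - f xstar) ^ 2) * (f x - g x) ^ 2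
        = (A * ∫ t, (f t - f xstar) ^ 2 ∂ν) / (1 - p) := by
      rw [hAdef]
      field_simp
    rw [heq]
    rw [div_le_iff₀ h1p]
    linarith
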